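/- With η(x) = a₁/2 + (a₃/6)x + (b₄/24)x² satisfying a₁ > 0, b₄ > 0, a₃² < 3a₁b₄, and l an odd nonnegative integer, n^{(l+2)/2} ∫_ℝ x^l exp(−n x² η(x)) dx converges as n → ∞ to −(a₃/6)·√(2π/a₁^{l+4})·E[Z^{l+3}], where Z is standard normal. -/

import Mathlib

open MeasureTheory ProbabilityTheory Real Filter
open scoped NNReal ENNReal

noncomputable def eta' (a₁ a₃ b₄ x : ℝ) : ℝ := a₁ / 2 + a₃ * x / 6 + b₄ * x ^ 2 / 24

lemma exp_sub_exp_bound {u v c : ℝ} (hu : c ≤ u) (hv : c ≤ v) :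
    |Real.exp (-u) - Real.exp (-v)| ≤ |u - v| * Real.exp (-c) := by
  wlog h : v ≤ u generalizing u v
  · rw [abs_sub_comm, abs_sub_comm u v]; exact this hv hu (le_of_not_ge h)
  have h1 : Real.exp (-u) ≤ Real.exp (-v) := Real.exp_le_exp.2 (by linarith)
  rw [abs_of_nonpos (by linarith), abs_of_nonneg (by linarith)]
  have h4 : Real.exp (-u) = Real.exp (-v) * Real.exp (-(u - v)) := by
    rw [← Real.exp_add]; ring_nf
  have h2 : 1 - (u - v) ≤ Real.exp (-(u - v)) := by
    have := Real.add_one_le_exp (-(u - v)); linarith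
  have h3 : Real.exp (-v) ≤ Real.exp (-c) := Real.exp_le_exp.2 (by linarith)
  have hp := Real.exp_pos (-v)
  nlinarith [Real.exp_pos (-(u - v))]

lemma integrable_abs_pow_exp {b : ℝ} (hb : 0 < b) (k : ℕ) :
    Integrable (fun x : ℝ => |x| ^ k * Real.exp (-b * x ^ 2)) := by
  have h : Integrable (fun x : ℝ => x ^ (k : ℝ) * Real.exp (-b * x ^ 2)) :=
    integrable_rpow_mul_exp_neg_mul_sq hb
      (lt_of_lt_of_le neg_one_lt_zero (Nat.cast_nonneg k))
  refine h.abs.congr (Filter.Eventually.of_forall fun x => ?_)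
  simp only [Real.rpow_natCast, abs_mul, abs_pow, Real.abs_exp]

lemma eta'_lower (a₁ a₃ b₄ : ℝ) (ha₁ : 0 < a₁) (hb₄ : 0 < b₄)
    (hdisc : a₃ ^ 2 < 3 * a₁ * b₄) (x : ℝ) :
    (3 * a₁ * b₄ - a₃ ^ 2) / (6 * b₄) ≤ eta' a₁ a₃ b₄ x := by
  rw [div_le_iff₀ (by linarith)]
  unfold eta'
  nlinarith [sq_nonneg (b₄ * x + 2 * a₃)]

lemma integrable_pow_exp_eta {a₁ a₃ b₄ : ℝ} (ha₁ : 0 < a₁) (hb₄ : 0 < b₄)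
    (hdisc : a₃ ^ 2 < 3 * a₁ * b₄) (k : ℕ) (c : ℝ) :
    Integrable (fun y : ℝ => y ^ k * Real.exp (-(y ^ 2) * eta' a₁ a₃ b₄ (c * y))) := by
  set m : ℝ := (3 * a₁ * b₄ - a₃ ^ 2) / (6 * b₄) with hm
  have hm0 : 0 < m := div_pos (by nlinarith) (by linarith)
  refine (integrable_abs_pow_exp hm0 k).mono' ?_ (Filter.Eventually.of_forall fun y => ?_)
  · apply Continuous.aestronglyMeasurable
    unfold eta'; fun_prop
  · rw [Real.norm_eq_abs, abs_mul, abs_pow, Real.abs_exp]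
    refine mul_le_mul_of_nonneg_left (Real.exp_le_exp.2 ?_) (pow_nonneg (abs_nonneg y) k)
    have := eta'_lower a₁ a₃ b₄ ha₁ hb₄ hdisc (c * y)
    nlinarith [sq_nonneg y]


lemma tendsto_ptwise (a₁ a₃ b₄ : ℝ) (l : ℕ) (y : ℝ) :
    Filter.Tendsto (fun n : ℕ => Real.sqrt n / 2 *
      (y ^ l * Real.exp (-(y ^ 2) * eta' a₁ a₃ b₄ ((Real.sqrt n)⁻¹ * y)) -
       y ^ l * Real.exp (-(y ^ 2) * eta' a₁ a₃ b₄ (-(Real.sqrt n)⁻¹ * y)))) Filter.atTop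
      (nhds (-(a₃ / 6) * (y ^ (l + 3) * Real.exp (-(a₁ / 2) * y ^ 2)))) := by
  set c0 : ℝ := -(y ^ 2) * (a₁ / 2) with hc0
  set c1 : ℝ := -(y ^ 2) * (a₃ * y / 6) with hc1
  set c2 : ℝ := -(y ^ 2) * (b₄ * y ^ 2 / 24) with hc2
  set f : ℝ → ℝ := fun t => Real.exp (-(y ^ 2) * eta' a₁ a₃ b₄ (t * y)) with hf_def
  have hpoly : HasDerivAt (fun t : ℝ => -(y ^ 2) * eta' a₁ a₃ b₄ (t * y)) c1 0 := by
    have h := (((hasDerivAt_id (0 : ℝ)).const_mul c1).const_add c0).add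
      ((hasDerivAt_pow 2 (0 : ℝ)).const_mul c2)
    norm_num at h
    have heq : (fun t : ℝ => -(y ^ 2) * eta' a₁ a₃ b₄ (t * y))
        = fun x : ℝ => c0 + c1 * x + c2 * x ^ 2 := by
      funext t; rw [hc0, hc1, hc2]; unfold eta'; ring
    rw [heq]; exact h
  have hf : HasDerivAt f (Real.exp (-(y ^ 2) * eta' a₁ a₃ b₄ (0 * y)) * c1) 0 := hpoly.exp
  set d : ℝ := Real.exp (-(y ^ 2) * eta' a₁ a₃ b₄ (0 * y)) * c1 with hd
  have hfneg : HasDerivAt (fun t : ℝ => f (-t)) (d * (-1)) 0 := by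
    have h0 : HasDerivAt f d (-(0 : ℝ)) := by rwa [neg_zero]
    exact HasDerivAt.comp 0 h0 (hasDerivAt_neg 0)
  have hG : HasDerivAt (fun t : ℝ => f t - f (-t)) (d - d * (-1)) 0 := hf.sub hfneg
  rw [hasDerivAt_iff_tendsto_slope] at hG
  have htn : Filter.Tendsto (fun n : ℕ => (Real.sqrt n)⁻¹) Filter.atTop
      (nhdsWithin 0 {(0:ℝ)}ᶜ) := by
    rw [tendsto_nhdsWithin_iff]
    constructor
    · have h1 : Filter.Tendsto (fun n : ℕ => Real.sqrt n) Filter.atTop Filter.atTop := by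
        have := (tendsto_rpow_atTop (by norm_num : (0:ℝ) < 1/2)).comp
          (tendsto_natCast_atTop_atTop (R := ℝ))
        refine this.congr fun n => ?_
        simp [Function.comp, Real.sqrt_eq_rpow]
      exact h1.inv_tendsto_atTop
    · filter_upwards [Filter.eventually_ge_atTop 1] with n hn
      have hn0 : (0:ℝ) < n := by exact_mod_cast Nat.lt_of_lt_of_le Nat.zero_lt_one hn
      have : 0 < Real.sqrt n := Real.sqrt_pos.2 hn0
      simp [this.ne']
  have hlim := (hG.comp htn).const_mul (y ^ l / 2)
  have hval : y ^ l / 2 * (d - d * (-1)) = -(a₃ / 6) * (y ^ (l + 3)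
      * Real.exp (-(a₁ / 2) * y ^ 2)) := by
    rw [hd, hc1, show -(y ^ 2) * eta' a₁ a₃ b₄ (0 * y) = -(a₁ / 2) * y ^ 2 by unfold eta'; ring]
    ring
  rw [← hval]
  refine hlim.congr' ?_
  filter_upwards [Filter.eventually_ge_atTop 1] with n hn
  have hn0 : (0:ℝ) < n := by exact_mod_cast Nat.lt_of_lt_of_le Nat.zero_lt_one hn
  have hs : 0 < Real.sqrt n := Real.sqrt_pos.2 hn0
  show y ^ l / 2 * slope (fun t : ℝ => f t - f (-t)) 0 (Real.sqrt n)⁻¹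
      = Real.sqrt n / 2 * (y ^ l * f (Real.sqrt n)⁻¹ - y ^ l * f (-(Real.sqrt n)⁻¹))
  rw [slope_def_field]
  simp only [neg_zero, sub_self, sub_zero]
  field_simp


set_option maxHeartbeats 2000000 in
theorem laplace_odd_moment (a₁ a₃ b₄ : ℝ) (ha₁ : 0 < a₁) (hb₄ : 0 < b₄)
    (hdisc : a₃^2 < 3 * a₁ * b₄) (l : ℕ) (hl : Odd l) :
    Filter.Tendsto
      (fun n : ℕ => (n : ℝ)^(((l : ℝ) + 2) / 2) *
        ∫ x : ℝ, x^l * Real.exp (-(n : ℝ) * x^2 * (a₁ / 2 + a₃ * x / 6 + b₄ * x^2 / 24)))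
      Filter.atTop
      (nhds (-(a₃ / 6) * Real.sqrt (2 * Real.pi / a₁^(l+4)) *
        ∫ z : ℝ, z^(l+3) ∂(gaussianReal 0 1))) := by
  -- final integral identity piece
  have hπ := Real.pi_pos
  have hgauss : (∫ z : ℝ, z^(l+3) ∂(gaussianReal 0 1))
      = (Real.sqrt (2*π))⁻¹ * ∫ z : ℝ, z^(l+3) * Real.exp (-(1/2) * z^2) := by
    rw [gaussianReal_of_var_ne_zero 0 one_ne_zero]
    have hpdf : (gaussianPDF 0 1) = fun x => ((Real.toNNReal (gaussianPDFReal 0 1 x) : ℝ≥0) : ℝ≥0∞) := by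
      funext x; rw [gaussianPDF]; rfl
    rw [hpdf, integral_withDensity_eq_integral_smul
      ((measurable_gaussianPDFReal 0 1).real_toNNReal) (fun z : ℝ => z^(l+3))]
    rw [← integral_const_mul]
    congr 1
    funext z
    rw [NNReal.smul_def, Real.coe_toNNReal _ (gaussianPDFReal_nonneg 0 1 z)]
    unfold gaussianPDFReal
    push_cast
    rw [mul_one, show -(z - 0)^2/(2*(1:ℝ)) = -(1/2) * z^2 by ring, smul_eq_mul]
    ring
  set J : ℝ := ∫ z : ℝ, z^(l+3) * Real.exp (-(1/2) * z^2) with hJ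
  have hs₁ : 0 < Real.sqrt a₁ := Real.sqrt_pos.2 ha₁
  have hcv2 := MeasureTheory.Measure.integral_comp_mul_left
      (fun z : ℝ => z^(l+3) * Real.exp (-(1/2) * z^2)) (Real.sqrt a₁)
  rw [abs_inv, abs_of_pos hs₁, smul_eq_mul] at hcv2
  have hptw : ∀ x : ℝ, (Real.sqrt a₁ * x)^(l+3) * Real.exp (-(1/2) * (Real.sqrt a₁ * x)^2)
      = (Real.sqrt a₁)^(l+3) * (x^(l+3) * Real.exp (-(a₁/2) * x^2)) := by
    intro x
    rw [show -(1/2) * (Real.sqrt a₁ * x)^2 = -(a₁/2) * x^2 by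
      rw [mul_pow, Real.sq_sqrt ha₁.le]; ring, mul_pow]
    ring
  simp only [hptw] at hcv2
  rw [integral_const_mul] at hcv2
  have hI : (∫ x : ℝ, x^(l+3) * Real.exp (-(a₁/2) * x^2))
      = ((Real.sqrt a₁)^(l+3))⁻¹ * ((Real.sqrt a₁)⁻¹ * J) := by
    rw [← hcv2]; field_simp
  have hsqpow : Real.sqrt (a₁^(l+4)) = (Real.sqrt a₁)^(l+4) := by
    rw [Real.sqrt_eq_rpow, Real.sqrt_eq_rpow, ← Real.rpow_natCast a₁ (l+4),
      ← Real.rpow_mul ha₁.le, mul_comm ((l+4 : ℕ) : ℝ) (1/2), Real.rpow_mul ha₁.le,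
      Real.rpow_natCast]
  have hLeq : (∫ y : ℝ, -(a₃ / 6) * (y ^ (l + 3) * Real.exp (-(a₁ / 2) * y ^ 2)))
      = -(a₃ / 6) * Real.sqrt (2 * π / a₁ ^ (l + 4)) *
        ∫ z : ℝ, z ^ (l + 3) ∂gaussianReal 0 1 := by
    rw [integral_const_mul, hgauss, hI]
    have hsq : Real.sqrt (2*π/a₁^(l+4)) = Real.sqrt (2*π) / (Real.sqrt a₁)^(l+4) := by
      rw [Real.sqrt_div (by positivity), hsqpow]
    rw [hsq]
    have h2π : 0 < Real.sqrt (2*π) := Real.sqrt_pos.2 (by positivity)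
    field_simp
    ring
  -- step: change of variables & symmetrization, for n ≥ 1
  have hstep : ∀ n : ℕ, 1 ≤ n → (n:ℝ)^(((l : ℝ) + 2) / 2) *
        (∫ x : ℝ, x^l * Real.exp (-(n : ℝ) * x^2 * (a₁ / 2 + a₃ * x / 6 + b₄ * x^2 / 24)))
      = ∫ y : ℝ, Real.sqrt n / 2 *
        (y ^ l * Real.exp (-(y ^ 2) * eta' a₁ a₃ b₄ ((Real.sqrt n)⁻¹ * y)) -
         y ^ l * Real.exp (-(y ^ 2) * eta' a₁ a₃ b₄ (-(Real.sqrt n)⁻¹ * y))) := by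
    intro n hn
    have hn0 : (0:ℝ) < n := by exact_mod_cast hn
    set s := Real.sqrt (n:ℝ) with hsdef
    have hs : 0 < s := Real.sqrt_pos.2 hn0
    have hs2 : s^2 = n := Real.sq_sqrt hn0.le
    have hcv := MeasureTheory.Measure.integral_comp_div
      (fun x : ℝ => x^l * Real.exp (-(n : ℝ) * x^2 * (a₁ / 2 + a₃ * x / 6 + b₄ * x^2 / 24))) s
    rw [abs_of_pos hs, smul_eq_mul] at hcv
    have hptw2 : ∀ y : ℝ, (y/s)^l * Real.exp (-(n : ℝ) * (y/s)^2 *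
        (a₁ / 2 + a₃ * (y/s) / 6 + b₄ * (y/s)^2 / 24))
        = (s^l)⁻¹ * (y^l * Real.exp (-(y^2) * eta' a₁ a₃ b₄ (s⁻¹ * y))) := by
      intro y
      rw [show -(n : ℝ) * (y/s)^2 * (a₁ / 2 + a₃ * (y/s) / 6 + b₄ * (y/s)^2 / 24)
        = -(y^2) * eta' a₁ a₃ b₄ (s⁻¹ * y) by
          unfold eta'; rw [← hs2]; field_simp, div_pow]
      ring
    simp only [hptw2] at hcv
    rw [integral_const_mul] at hcv
    have hintp : Integrable (fun y : ℝ => y^l * Real.exp (-(y^2) * eta' a₁ a₃ b₄ (s⁻¹ * y))) :=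
      integrable_pow_exp_eta ha₁ hb₄ hdisc l s⁻¹
    have hintm : Integrable (fun y : ℝ => y^l * Real.exp (-(y^2) * eta' a₁ a₃ b₄ (-s⁻¹ * y))) :=
      integrable_pow_exp_eta ha₁ hb₄ hdisc l (-s⁻¹)
    have hsym : (∫ y : ℝ, (fun z : ℝ => z^l * Real.exp (-(z^2) * eta' a₁ a₃ b₄ (s⁻¹ * z))) (-y))
        = ∫ y : ℝ, y^l * Real.exp (-(y^2) * eta' a₁ a₃ b₄ (s⁻¹ * y)) :=
      integral_neg_eq_self
        (fun z : ℝ => z^l * Real.exp (-(z^2) * eta' a₁ a₃ b₄ (s⁻¹ * z))) volume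
    have hodd : ∀ y : ℝ, (-y)^l * Real.exp (-((-y)^2) * eta' a₁ a₃ b₄ (s⁻¹ * (-y)))
        = -(y^l * Real.exp (-(y^2) * eta' a₁ a₃ b₄ (-s⁻¹ * y))) := by
      intro y
      rw [hl.neg_pow, neg_sq, show s⁻¹ * (-y) = -s⁻¹ * y by ring]
      ring
    have h2 : (∫ y : ℝ, y^l * Real.exp (-(y^2) * eta' a₁ a₃ b₄ (s⁻¹ * y)))
        = - ∫ y : ℝ, y^l * Real.exp (-(y^2) * eta' a₁ a₃ b₄ (-s⁻¹ * y)) := by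
      rw [← hsym]
      simp only [hodd]
      rw [integral_neg]
    have hrpow : (n:ℝ)^(((l : ℝ) + 2) / 2) = s^(l+2) := by
      rw [hsdef, Real.sqrt_eq_rpow, ← Real.rpow_natCast ((n:ℝ)^(1/2:ℝ)) (l+2),
        ← Real.rpow_mul (Nat.cast_nonneg n)]
      congr 1
      push_cast
      ring
    have hF : (∫ x : ℝ, x^l * Real.exp (-(n : ℝ) * x^2 *
        (a₁ / 2 + a₃ * x / 6 + b₄ * x^2 / 24)))
        = s⁻¹ * ((s^l)⁻¹ * ∫ y : ℝ, y^l * Real.exp (-(y^2) * eta' a₁ a₃ b₄ (s⁻¹ * y))) := by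
      rw [hcv]; field_simp
      congr 1; funext x; ring
    rw [hrpow, hF, integral_const_mul, integral_sub hintp hintm, h2]
    field_simp
    ring
  set m : ℝ := (3 * a₁ * b₄ - a₃ ^ 2) / (6 * b₄) with hm
  have hm0 : 0 < m := div_pos (by nlinarith) (by linarith)
  have hDCT : Filter.Tendsto (fun n : ℕ => ∫ y : ℝ, Real.sqrt n / 2 *
        (y ^ l * Real.exp (-(y ^ 2) * eta' a₁ a₃ b₄ ((Real.sqrt n)⁻¹ * y)) -
         y ^ l * Real.exp (-(y ^ 2) * eta' a₁ a₃ b₄ (-(Real.sqrt n)⁻¹ * y)))) Filter.atTop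
      (nhds (∫ y : ℝ, -(a₃ / 6) * (y ^ (l + 3) * Real.exp (-(a₁ / 2) * y ^ 2)))) := by
    refine tendsto_integral_filter_of_dominated_convergence
      (fun y : ℝ => |a₃| / 6 * (|y| ^ (l + 3) * Real.exp (-m * y ^ 2))) ?_ ?_ ?_ ?_
    · refine Filter.Eventually.of_forall fun n => ?_
      apply Continuous.aestronglyMeasurable
      unfold eta'
      fun_prop
    · filter_upwards [Filter.eventually_ge_atTop 1] with n hn
      refine Filter.Eventually.of_forall fun y => ?_
      have hn0 : (0:ℝ) < n := by exact_mod_cast hn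
      have hs : 0 < Real.sqrt n := Real.sqrt_pos.2 hn0
      have hu : m * y^2 ≤ y^2 * eta' a₁ a₃ b₄ ((Real.sqrt n)⁻¹ * y) := by
        have := eta'_lower a₁ a₃ b₄ ha₁ hb₄ hdisc ((Real.sqrt n)⁻¹ * y)
        rw [hm]; nlinarith [sq_nonneg y]
      have hv : m * y^2 ≤ y^2 * eta' a₁ a₃ b₄ (-(Real.sqrt n)⁻¹ * y) := by
        have := eta'_lower a₁ a₃ b₄ ha₁ hb₄ hdisc (-(Real.sqrt n)⁻¹ * y)
        rw [hm]; nlinarith [sq_nonneg y]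
      have key := exp_sub_exp_bound hu hv
      have huv : y^2 * eta' a₁ a₃ b₄ ((Real.sqrt n)⁻¹ * y)
          - y^2 * eta' a₁ a₃ b₄ (-(Real.sqrt n)⁻¹ * y) = a₃ * y^3 / (3 * Real.sqrt n) := by
        unfold eta'; field_simp; ring
      rw [huv, show -(m * y^2) = -m * y^2 from (neg_mul m (y^2)).symm] at key
      rw [Real.norm_eq_abs, ← mul_sub, abs_mul, abs_mul, abs_pow,
        abs_of_pos (by positivity : (0:ℝ) < Real.sqrt n / 2),
        neg_mul (y^2) (eta' a₁ a₃ b₄ ((Real.sqrt n)⁻¹ * y)),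
        neg_mul (y^2) (eta' a₁ a₃ b₄ (-(Real.sqrt n)⁻¹ * y))]
      calc Real.sqrt n / 2 * (|y| ^ l *
            |Real.exp (-(y^2 * eta' a₁ a₃ b₄ ((Real.sqrt n)⁻¹ * y)))
              - Real.exp (-(y^2 * eta' a₁ a₃ b₄ (-(Real.sqrt n)⁻¹ * y)))|)
          ≤ Real.sqrt n / 2 * (|y| ^ l *
            (|a₃ * y^3 / (3 * Real.sqrt n)| * Real.exp (-m * y^2))) := by
            refine mul_le_mul_of_nonneg_left (mul_le_mul_of_nonneg_left key
              (pow_nonneg (abs_nonneg y) l)) (by positivity)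
        _ = |a₃| / 6 * (|y| ^ (l + 3) * Real.exp (-m * y ^ 2)) := by
            rw [abs_div, abs_mul, abs_pow,
              abs_of_pos (show (0:ℝ) < 3 * Real.sqrt n by positivity)]
            field_simp
            ring
    · exact (integrable_abs_pow_exp hm0 (l+3)).const_mul (|a₃|/6)
    · exact Filter.Eventually.of_forall fun y => tendsto_ptwise a₁ a₃ b₄ l y
  rw [hLeq] at hDCT
  refine Filter.Tendsto.congr' ?_ hDCT
  filter_upwards [Filter.eventually_ge_atTop 1] with n hn
  exact (hstep n hn).symm
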